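/- In U_q(sl_n(ℂ)), for all 1 ≤ i < k < j ≤ n the recursively defined root vectors satisfy E_{i,j} = E_{i,k}E_{k,j} − q·E_{k,j}E_{i,k} and E_{j,i} = E_{j,k}E_{k,i} − q^{-1}·E_{k,i}E_{j,k}; in particular the right-hand sides are independent of the choice of intermediate index k. -/

import Mathlib

noncomputable section

/-- The `q`-number `[s]_q = (q^s - q^{-s})/(q - q^{-1})`. -/
def qnum (q : ℂ) (s : ℕ) : ℂ := (q ^ s - q⁻¹ ^ s) / (q - q⁻¹)

/-- The Cartan matrix of `sl_n`: `a_{ii} = 2`, `a_{ij} = -1` if `|i-j| = 1`, else `0`. -/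
def cartan (i j : ℕ) : ℤ := if i = j then 2 else if i + 1 = j ∨ j + 1 = i then -1 else 0

variable {U : Type*} [Ring U] [Algebra ℂ U]

/-- Auxiliary: `EupAux q e i g = E_{i,i+1+g}`, the raising root vectors indexed by
the gap `g`, built from the generators `e` by
`E_{i,i+1} = e_i`, `E_{i,j} = E_{i,j-1}E_{j-1,j} − q·E_{j-1,j}E_{i,j-1}`. -/
def EupAux (q : ℂ) (e : ℕ → U) (i : ℕ) : ℕ → U
  | 0 => e i
  | g + 1 => EupAux q e i g * e (i + g + 1) - q • (e (i + g + 1) * EupAux q e i g)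

/-- The raising root vector `E_{i,j}` (intended for `i < j`). -/
def Eup (q : ℂ) (e : ℕ → U) (i j : ℕ) : U := EupAux q e i (j - i - 1)

/-- Auxiliary: `EdnAux q f j g = E_{j,j-1-g}`, the lowering root vectors indexed by
the gap `g`, built from the generators `f` by
`E_{i+1,i} = f_i`, `E_{j,i} = E_{j,i+1}E_{i+1,i} − q⁻¹·E_{i+1,i}E_{j,i+1}`. -/
def EdnAux (q : ℂ) (f : ℕ → U) (j : ℕ) : ℕ → U
  | 0 => f (j - 1)
  | g + 1 => EdnAux q f j g * f (j - g - 2) - q⁻¹ • (f (j - g - 2) * EdnAux q f j g)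

/-- The lowering root vector `E_{j,i}` (intended for `i < j`). -/
def Edn (q : ℂ) (f : ℕ → U) (j i : ℕ) : U := EdnAux q f j (j - i - 1)

/-- `K_{i,j} = k_i k_{i+1} ⋯ k_{j-1}`. -/
def Kprod (k : ℕ → U) (i j : ℕ) : U := ((List.range' i (j - i)).map k).prod


lemma split_step (q : ℂ) (A B e : U) (hc : e * A = A * e) :
    (A*B - q•(B*A)) * e - q•(e * (A*B - q•(B*A))) =
    A*(B*e - q•(e*B)) - q•((B*e - q•(e*B))*A) := by
  have hc2 : ∀ x : U, e * (A * x) = A * (e * x) := by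
    intro x; rw [← mul_assoc, hc, mul_assoc]
  simp only [mul_sub, sub_mul, smul_sub, smul_mul_assoc, mul_smul_comm, smul_smul,
    mul_assoc, hc, hc2]
  abel

lemma EupAux_comm (q : ℂ) (e : ℕ → U) (x : U) (i : ℕ) :
    ∀ g, (∀ t, t ≤ g → e (i + t) * x = x * e (i + t)) →
      x * EupAux q e i g = EupAux q e i g * x := by
  intro g
  induction g with
  | zero => intro h
            have := h 0 (le_refl 0); simpa [EupAux] using this.symm
  | succ g ih =>
    intro h
    have h1 : e (i + g + 1) * x = x * e (i + g + 1) := by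
      have := h (g+1) (le_refl _); rwa [← add_assoc] at this
    have h2 := ih (fun t ht => h t (le_trans ht (Nat.le_succ g)))
    have hdef : EupAux q e i (g+1) =
        EupAux q e i g * e (i + g + 1) - q • (e (i + g + 1) * EupAux q e i g) := rfl
    rw [hdef]
    have c1 : Commute x (e (i + g + 1)) := h1.symm
    have c2 : Commute x (EupAux q e i g) := h2
    exact ((c2.mul_right c1).sub_right ((c1.mul_right c2).smul_right q)).eq

lemma EdnAux_comm (q : ℂ) (f : ℕ → U) (x : U) (j : ℕ) :
    ∀ g, (∀ t, t ≤ g → f (j - 1 - t) * x = x * f (j - 1 - t)) →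
      x * EdnAux q f j g = EdnAux q f j g * x := by
  intro g
  induction g with
  | zero => intro h
            have := h 0 (le_refl 0); simpa [EdnAux] using this.symm
  | succ g ih =>
    intro h
    have h1 : f (j - g - 2) * x = x * f (j - g - 2) := by
      have := h (g+1) (le_refl _)
      have e1 : j - 1 - (g+1) = j - g - 2 := by omega
      rwa [e1] at this
    have h2 := ih (fun t ht => h t (le_trans ht (Nat.le_succ g)))
    have hdef : EdnAux q f j (g+1) =
        EdnAux q f j g * f (j - g - 2) - q⁻¹ • (f (j - g - 2) * EdnAux q f j g) := rfl
    rw [hdef]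
    have c1 : Commute x (f (j - g - 2)) := h1.symm
    have c2 : Commute x (EdnAux q f j g) := h2
    exact ((c2.mul_right c1).sub_right ((c1.mul_right c2).smul_right q⁻¹)).eq

lemma Eup_succ (q : ℂ) (e : ℕ → U) (i j : ℕ) (h : i < j) :
    Eup q e i (j+1) = Eup q e i j * e j - q • (e j * Eup q e i j) := by
  unfold Eup
  have h1 : j + 1 - i - 1 = (j - i - 1) + 1 := by omega
  rw [h1]
  show EupAux q e i (j - i - 1) * e (i + (j - i - 1) + 1) -
      q • (e (i + (j - i - 1) + 1) * EupAux q e i (j - i - 1)) = _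
  have h2 : i + (j - i - 1) + 1 = j := by omega
  rw [h2]

lemma Eup_base (q : ℂ) (e : ℕ → U) (c : ℕ) : Eup q e c (c+1) = e c := by
  unfold Eup
  have h0 : c + 1 - c - 1 = 0 := by omega
  rw [h0]; rfl

lemma Edn_step (q : ℂ) (f : ℕ → U) (j i : ℕ) (h : i + 1 < j) :
    Edn q f j i = Edn q f j (i+1) * f i - q⁻¹ • (f i * Edn q f j (i+1)) := by
  unfold Edn
  have h1 : j - i - 1 = (j - (i+1) - 1) + 1 := by omega
  rw [h1]
  show EdnAux q f j (j - (i+1) - 1) * f (j - (j - (i+1) - 1) - 2) -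
      q⁻¹ • (f (j - (j - (i+1) - 1) - 2) * EdnAux q f j (j - (i+1) - 1)) = _
  have h2 : j - (j - (i+1) - 1) - 2 = i := by omega
  rw [h2]

lemma Edn_base (q : ℂ) (f : ℕ → U) (c : ℕ) (h : 1 ≤ c) : Edn q f c (c-1) = f (c-1) := by
  unfold Edn
  have h0 : c - (c-1) - 1 = 0 := by omega
  rw [h0]; rfl

/-- in `U_q(sl_n(ℂ))` (formalized universally: in any unital associative
`ℂ`-algebra `U` with elements `e i`, `f i`, `ka i`, `kinv i` (`1 ≤ i ≤ n-1`) satisfying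
the defining relations of `U_q(sl_n(ℂ))`), for all `1 ≤ i < c < j ≤ n` the recursively
defined root vectors satisfy `E_{i,j} = E_{i,c}E_{c,j} − q·E_{c,j}E_{i,c}` and
`E_{j,i} = E_{j,c}E_{c,i} − q⁻¹·E_{c,i}E_{j,c}`; in particular the right-hand sides do
not depend on the intermediate index `c`. -/
theorem stmt8 {U : Type*} [Ring U] [Algebra ℂ U]
    (q : ℂ) (hq0 : q ≠ 0) (hq1 : q ≠ 1) (hqm1 : q ≠ -1)
    (n : ℕ) (hn : 2 ≤ n)
    (e f ka kinv : ℕ → U)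
    (hkk : ∀ i, 1 ≤ i → i ≤ n - 1 → ka i * kinv i = 1)
    (hkk' : ∀ i, 1 ≤ i → i ≤ n - 1 → kinv i * ka i = 1)
    (hkcomm : ∀ i j, 1 ≤ i → i ≤ n - 1 → 1 ≤ j → j ≤ n - 1 → ka i * ka j = ka j * ka i)
    (hke : ∀ i j, 1 ≤ i → i ≤ n - 1 → 1 ≤ j → j ≤ n - 1 →
      ka i * e j * kinv i = (q ^ cartan i j) • e j)
    (hkf : ∀ i j, 1 ≤ i → i ≤ n - 1 → 1 ≤ j → j ≤ n - 1 →
      ka i * f j * kinv i = (q ^ (-cartan i j)) • f j)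
    (hef : ∀ i j, 1 ≤ i → i ≤ n - 1 → 1 ≤ j → j ≤ n - 1 →
      e i * f j - f j * e i = if i = j then (q - q⁻¹)⁻¹ • (ka i - kinv i) else 0)
    (hee : ∀ i j, 1 ≤ i → i ≤ n - 1 → 1 ≤ j → j ≤ n - 1 → (i + 1 = j ∨ j + 1 = i) →
      e i ^ 2 * e j - (q + q⁻¹) • (e i * e j * e i) + e j * e i ^ 2 = 0)
    (hff : ∀ i j, 1 ≤ i → i ≤ n - 1 → 1 ≤ j → j ≤ n - 1 → (i + 1 = j ∨ j + 1 = i) →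
      f i ^ 2 * f j - (q + q⁻¹) • (f i * f j * f i) + f j * f i ^ 2 = 0)
    (heecomm : ∀ i j, 1 ≤ i → i ≤ n - 1 → 1 ≤ j → j ≤ n - 1 → (i + 1 < j ∨ j + 1 < i) →
      e i * e j = e j * e i)
    (hffcomm : ∀ i j, 1 ≤ i → i ≤ n - 1 → 1 ≤ j → j ≤ n - 1 → (i + 1 < j ∨ j + 1 < i) →
      f i * f j = f j * f i)
    :
    ∀ i c j : ℕ, 1 ≤ i → i < c → c < j → j ≤ n →
      Eup q e i j = Eup q e i c * Eup q e c j - q • (Eup q e c j * Eup q e i c) ∧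
      Edn q f j i = Edn q f j c * Edn q f c i - q⁻¹ • (Edn q f c i * Edn q f j c) := by
  intro i c j hi hic hcj hjn
  refine ⟨?_, ?_⟩
  · have key : ∀ j', c + 1 ≤ j' → j' ≤ n →
        Eup q e i j' = Eup q e i c * Eup q e c j' - q • (Eup q e c j' * Eup q e i c) := by
      intro j' hj'
      induction j', hj' using Nat.le_induction with
      | base =>
        intro _
        rw [Eup_base q e c, Eup_succ q e i c hic]
      | succ j' hj' ih =>
        intro hjn'
        have hcomm : e j' * Eup q e i c = Eup q e i c * e j' := by
          refine EupAux_comm q e (e j') i (c - i - 1) ?_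
          intro t ht
          exact heecomm (i + t) j' (by omega) (by omega) (by omega) (by omega)
            (Or.inl (by omega))
        rw [Eup_succ q e i j' (by omega), ih (by omega), Eup_succ q e c j' (by omega)]
        exact split_step q (Eup q e i c) (Eup q e c j') (e j') hcomm
    exact key j (by omega) hjn
  · have key : ∀ d i', i' + d + 1 = c → 1 ≤ i' →
        Edn q f j i' = Edn q f j c * Edn q f c i' - q⁻¹ • (Edn q f c i' * Edn q f j c) := by
      intro d
      induction d with
      | zero =>
        intro i' h1 h2
        have hbase : Edn q f c i' = f i' := by
          have hi' : i' = c - 1 := by omega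
          rw [hi']; exact Edn_base q f c (by omega)
        rw [Edn_step q f j i' (by omega), show i' + 1 = c from by omega, hbase]
      | succ d ihd =>
        intro i' h1 h2
        have ih := ihd (i'+1) (by omega) (by omega)
        have hcomm : f i' * Edn q f j c = Edn q f j c * f i' := by
          refine EdnAux_comm q f (f i') j (j - c - 1) ?_
          intro t ht
          exact hffcomm (j - 1 - t) i' (by omega) (by omega) (by omega) (by omega)
            (Or.inr (by omega))
        rw [Edn_step q f j i' (by omega), ih, Edn_step q f c i' (by omega)]
        exact split_step q⁻¹ (Edn q f j c) (Edn q f c (i'+1)) (f i') hcomm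
    exact key (c - i - 1) i (by omega) hi
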